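/- Let Φ be a positive trace-preserving map on M_d and τ a density matrix. Define the replacement channel R(X) := tr(X)·Φ(τ). Then κ_tr(Φ) ≤ ‖Φ − R‖_{1→1} ≤ 4·κ_tr(Φ), where ‖·‖_{1→1} is the operator norm induced by the trace norm. -/

import Mathlib

open Matrix
open scoped ComplexOrder

namespace TD

variable {d : ℕ}

noncomputable def trNorm (A : Matrix (Fin d) (Fin d) ℂ) : ℝ :=
  (((Matrix.posSemidef_conjTranspose_mul_self A).1.eigenvectorUnitary.1 *
      diagonal ((fun x : ℝ => (x : ℂ)) ∘ (Real.sqrt ∘ (Matrix.posSemidef_conjTranspose_mul_self A).1.eigenvalues)) *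
      (star (Matrix.posSemidef_conjTranspose_mul_self A).1.eigenvectorUnitary :
        Matrix (Fin d) (Fin d) ℂ)).trace).re

noncomputable def hsNorm (A : Matrix (Fin d) (Fin d) ℂ) : ℝ :=
  Real.sqrt ((Aᴴ * A).trace.re)

def Density (ρ : Matrix (Fin d) (Fin d) ℂ) : Prop :=
  ρ.PosSemidef ∧ ρ.trace = 1

def PosMap (T : Matrix (Fin d) (Fin d) ℂ →ₗ[ℂ] Matrix (Fin d) (Fin d) ℂ) : Prop :=
  ∀ A, A.PosSemidef → (T A).PosSemidef

def TrPres (T : Matrix (Fin d) (Fin d) ℂ →ₗ[ℂ] Matrix (Fin d) (Fin d) ℂ) : Prop :=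
  ∀ A, (T A).trace = A.trace

noncomputable def kappaTr (T : Matrix (Fin d) (Fin d) ℂ →ₗ[ℂ] Matrix (Fin d) (Fin d) ℂ) : ℝ :=
  ⨆ X : {X : Matrix (Fin d) (Fin d) ℂ // X.IsHermitian ∧ X.trace = 0 ∧ X ≠ 0},
    trNorm (T X.1) / trNorm X.1

noncomputable def opNorm1 (L : Matrix (Fin d) (Fin d) ℂ →ₗ[ℂ] Matrix (Fin d) (Fin d) ℂ) : ℝ :=
  ⨆ X : {X : Matrix (Fin d) (Fin d) ℂ // X ≠ 0}, trNorm (L X.1) / trNorm X.1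

noncomputable def s0 (T : Matrix (Fin d) (Fin d) ℂ →ₗ[ℂ] Matrix (Fin d) (Fin d) ℂ) : ℝ :=
  ⨆ X : {X : Matrix (Fin d) (Fin d) ℂ // X.trace = 0 ∧ X ≠ 0},
    hsNorm (T X.1) / hsNorm X.1

noncomputable def choi (T : Matrix (Fin d) (Fin d) ℂ →ₗ[ℂ] Matrix (Fin d) (Fin d) ℂ) :
    Matrix (Fin d × Fin d) (Fin d × Fin d) ℂ :=
  Matrix.of fun p q => T (Matrix.single p.1 q.1 1) p.2 q.2

def CP (T : Matrix (Fin d) (Fin d) ℂ →ₗ[ℂ] Matrix (Fin d) (Fin d) ℂ) : Prop :=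
  (choi T).PosSemidef

noncomputable def replaceChan (τ : Matrix (Fin d) (Fin d) ℂ) :
    Matrix (Fin d) (Fin d) ℂ →ₗ[ℂ] Matrix (Fin d) (Fin d) ℂ where
  toFun X := X.trace • τ
  map_add' X Y := by simp [Matrix.trace_add, add_smul]
  map_smul' c X := by simp [Matrix.trace_smul, smul_smul]

noncomputable def prodComp {n : ℕ} (T : Fin n → (Matrix (Fin d) (Fin d) ℂ →ₗ[ℂ] Matrix (Fin d) (Fin d) ℂ)) :
    Matrix (Fin d) (Fin d) ℂ →ₗ[ℂ] Matrix (Fin d) (Fin d) ℂ :=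
  (List.ofFn T).foldl (fun acc f => f ∘ₗ acc) LinearMap.id

noncomputable def lpow (T : Matrix (Fin d) (Fin d) ℂ →ₗ[ℂ] Matrix (Fin d) (Fin d) ℂ) :
    ℕ → (Matrix (Fin d) (Fin d) ℂ →ₗ[ℂ] Matrix (Fin d) (Fin d) ℂ)
  | 0 => LinearMap.id
  | n + 1 => T ∘ₗ lpow T n

noncomputable def conjPair (K0 K1 : Matrix (Fin 2) (Fin 2) ℂ) :
    Matrix (Fin 2) (Fin 2) ℂ →ₗ[ℂ] Matrix (Fin 2) (Fin 2) ℂ where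
  toFun X := K0 * X * K0ᴴ + K1 * X * K1ᴴ
  map_add' X Y := by
    simp only [Matrix.mul_add, Matrix.add_mul]
    abel
  map_smul' c X := by
    simp [Matrix.mul_smul, Matrix.smul_mul, smul_add]

end TD


section Compat
open scoped MatrixOrder
variable {d : ℕ}

noncomputable def Matrix.PosSemidef.sqrt {A : Matrix (Fin d) (Fin d) ℂ} (_hA : A.PosSemidef) :
    Matrix (Fin d) (Fin d) ℂ :=
  CFC.sqrt A

lemma Matrix.PosSemidef.posSemidef_sqrt {A : Matrix (Fin d) (Fin d) ℂ} (hA : A.PosSemidef) :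
    hA.sqrt.PosSemidef :=
  (CFC.sqrt_nonneg A).posSemidef

lemma Matrix.PosSemidef.sqrt_mul_self {A : Matrix (Fin d) (Fin d) ℂ} (hA : A.PosSemidef) :
    hA.sqrt * hA.sqrt = A :=
  CFC.sqrt_mul_sqrt_self A hA.nonneg

lemma Matrix.PosSemidef.sq_sqrt {A : Matrix (Fin d) (Fin d) ℂ} (hA : A.PosSemidef) :
    hA.sqrt ^ 2 = A :=
  CFC.sq_sqrt A hA.nonneg

lemma Matrix.PosSemidef.eq_sqrt_of_sq_eq {A B : Matrix (Fin d) (Fin d) ℂ} (hA : A.PosSemidef)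
    (hB : B.PosSemidef) (h : A ^ 2 = B) : A = hB.sqrt :=
  ((CFC.sqrt_eq_iff B A hB.nonneg hA.nonneg).mpr (by rw [← sq, h])).symm

lemma TD.trNorm_def' (A : Matrix (Fin d) (Fin d) ℂ) :
    TD.trNorm A = ((Matrix.posSemidef_conjTranspose_mul_self A).sqrt.trace).re := by
  rw [TD.trNorm, Matrix.PosSemidef.sqrt, CFC.sqrt_eq_cfc,
    cfc_nnreal_eq_real _ _ (Matrix.posSemidef_conjTranspose_mul_self A).nonneg,
    (Matrix.posSemidef_conjTranspose_mul_self A).1.cfc_eq, Matrix.IsHermitian.cfc,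
    Unitary.conjStarAlgAut_apply]
  congr
  funext x
  unfold Real.sqrt
  rfl

end Compat

namespace TDProof

open Matrix TD
open scoped ComplexOrder InnerProductSpace ComplexConjugate

variable {d : ℕ}

lemma trace_unitary_conj (U D : Matrix (Fin d) (Fin d) ℂ) (h : star U * U = 1) :
    (U * D * star U).trace = D.trace := by
  rw [Matrix.trace_mul_cycle, h, Matrix.one_mul]

lemma trace_eq_sum_eigenvalues {A : Matrix (Fin d) (Fin d) ℂ} (hA : A.IsHermitian) :
    A.trace = ∑ i, (hA.eigenvalues i : ℂ) := by
  conv_lhs => rw [hA.spectral_theorem, Unitary.conjStarAlgAut_apply]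
  rw [trace_unitary_conj _ _ (Matrix.UnitaryGroup.star_mul_self _)]
  simp [Matrix.trace_diagonal]

lemma trNorm_eq_sum (A : Matrix (Fin d) (Fin d) ℂ) :
    trNorm A = ∑ j, ((Matrix.posSemidef_conjTranspose_mul_self A).posSemidef_sqrt.1).eigenvalues j := by
  rw [trNorm_def', trace_eq_sum_eigenvalues ((Matrix.posSemidef_conjTranspose_mul_self A).posSemidef_sqrt.1)]
  simp

noncomputable def toE (x : Fin d → ℂ) : EuclideanSpace ℂ (Fin d) :=
  (WithLp.equiv 2 (Fin d → ℂ)).symm x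

lemma inner_toE (x y : Fin d → ℂ) : ⟪toE x, toE y⟫_ℂ = dotProduct (star x) y := by
  rw [dotProduct_comm]; rfl

lemma dot_mulVec_mulVec (A : Matrix (Fin d) (Fin d) ℂ) (x y : Fin d → ℂ) :
    dotProduct (star (A *ᵥ x)) (A *ᵥ y)
      = dotProduct (star x) ((Aᴴ * A) *ᵥ y) := by
  rw [Matrix.star_mulVec, Matrix.dotProduct_mulVec, Matrix.vecMul_vecMul,
    ← Matrix.dotProduct_mulVec]

lemma toEuclideanLin_apply' (A : Matrix (Fin d) (Fin d) ℂ) (x : Fin d → ℂ) :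
    Matrix.toEuclideanLin A (toE x) = toE (A *ᵥ x) := rfl

lemma toE_equiv (x : EuclideanSpace ℂ (Fin d)) : toE (WithLp.equiv 2 (Fin d → ℂ) x) = x :=
  (WithLp.equiv 2 (Fin d → ℂ)).symm_apply_apply x

lemma inner_toEuclideanLin (A : Matrix (Fin d) (Fin d) ℂ) (x y : EuclideanSpace ℂ (Fin d)) :
    ⟪x, Matrix.toEuclideanLin A y⟫_ℂ
      = dotProduct (star (WithLp.equiv 2 (Fin d → ℂ) x))
          (A *ᵥ (WithLp.equiv 2 (Fin d → ℂ) y)) := by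
  rw [← toE_equiv x, ← toE_equiv y, toEuclideanLin_apply', inner_toE]
  simp [toE]

noncomputable def sqEig (A : Matrix (Fin d) (Fin d) ℂ) : Fin d → ℝ :=
  ((Matrix.posSemidef_conjTranspose_mul_self A).posSemidef_sqrt.1).eigenvalues

noncomputable def sqBasis (A : Matrix (Fin d) (Fin d) ℂ) :
    OrthonormalBasis (Fin d) ℂ (EuclideanSpace ℂ (Fin d)) :=
  ((Matrix.posSemidef_conjTranspose_mul_self A).posSemidef_sqrt.1).eigenvectorBasis

lemma sqEig_nonneg (A : Matrix (Fin d) (Fin d) ℂ) (j : Fin d) : 0 ≤ sqEig A j :=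
  (Matrix.posSemidef_conjTranspose_mul_self A).posSemidef_sqrt.eigenvalues_nonneg j

lemma trNorm_eq_sum' (A : Matrix (Fin d) (Fin d) ℂ) : trNorm A = ∑ j, sqEig A j :=
  trNorm_eq_sum A

lemma sq_mulVec_basis (A : Matrix (Fin d) (Fin d) ℂ) (j : Fin d) :
    (Aᴴ * A) *ᵥ ⇑(sqBasis A j) = ((sqEig A j) ^ 2 : ℝ) • ⇑(sqBasis A j) := by
  simp only [sqBasis, sqEig]
  have h := (Matrix.posSemidef_conjTranspose_mul_self A).sqrt_mul_self
  have key : ((Matrix.posSemidef_conjTranspose_mul_self A).sqrt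
      * (Matrix.posSemidef_conjTranspose_mul_self A).sqrt) *ᵥ
      ⇑(((Matrix.posSemidef_conjTranspose_mul_self A).posSemidef_sqrt.1).eigenvectorBasis j)
      = (((Matrix.posSemidef_conjTranspose_mul_self A).posSemidef_sqrt.1).eigenvalues j ^ 2 : ℝ) •
      ⇑(((Matrix.posSemidef_conjTranspose_mul_self A).posSemidef_sqrt.1).eigenvectorBasis j) := by
    rw [← Matrix.mulVec_mulVec,
      ((Matrix.posSemidef_conjTranspose_mul_self A).posSemidef_sqrt.1).mulVec_eigenvectorBasis j,
      Matrix.mulVec_smul,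
      ((Matrix.posSemidef_conjTranspose_mul_self A).posSemidef_sqrt.1).mulVec_eigenvectorBasis j,
      smul_smul, ← sq]
  rw [h] at key
  exact key

lemma inner_lin_basis (A : Matrix (Fin d) (Fin d) ℂ) (j k : Fin d) :
    ⟪Matrix.toEuclideanLin A (sqBasis A j), Matrix.toEuclideanLin A (sqBasis A k)⟫_ℂ
      = ((sqEig A k : ℂ) ^ 2) * (if j = k then 1 else 0) := by
  rw [← toE_equiv (sqBasis A j), ← toE_equiv (sqBasis A k), toEuclideanLin_apply',
    toEuclideanLin_apply', inner_toE, dot_mulVec_mulVec]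
  have hb : (WithLp.equiv 2 (Fin d → ℂ)) (sqBasis A j) = ⇑(sqBasis A j) := rfl
  have hb' : (WithLp.equiv 2 (Fin d → ℂ)) (sqBasis A k) = ⇑(sqBasis A k) := rfl
  rw [hb, hb', sq_mulVec_basis]
  have horth := (sqBasis A).orthonormal
  have := orthonormal_iff_ite.mp horth j k
  rw [EuclideanSpace.inner_eq_star_dotProduct, dotProduct_comm] at this
  rw [dotProduct_smul]
  rw [(show (dotProduct (star ⇑(sqBasis A j)) ⇑(sqBasis A k)) = if j = k then 1 else 0
      from this)]
  ring_nf
  simp [mul_comm]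

lemma norm_lin_basis (A : Matrix (Fin d) (Fin d) ℂ) (j : Fin d) :
    ‖Matrix.toEuclideanLin A (sqBasis A j)‖ = sqEig A j := by
  have h := inner_lin_basis A j j
  rw [if_pos rfl, mul_one] at h
  have h2 : (‖Matrix.toEuclideanLin A (sqBasis A j)‖ : ℝ) ^ 2 = (sqEig A j) ^ 2 := by
    have := @norm_sq_eq_re_inner ℂ _ _ _ _ (Matrix.toEuclideanLin A (sqBasis A j))
    rw [this, h]
    norm_cast
  have := sqEig_nonneg A j
  nlinarith [norm_nonneg (Matrix.toEuclideanLin A (sqBasis A j))]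

lemma sum_re_inner_le {ι : Type*} [Fintype ι] (A : Matrix (Fin d) (Fin d) ℂ)
    (u v : ι → EuclideanSpace ℂ (Fin d)) (hu : Orthonormal ℂ u) (hv : Orthonormal ℂ v) :
    ∑ i, (⟪u i, Matrix.toEuclideanLin A (v i)⟫_ℂ).re ≤ trNorm A := by
  classical
  have hterm : ∀ i, (⟪u i, Matrix.toEuclideanLin A (v i)⟫_ℂ).re
      ≤ ∑ j, ‖⟪v i, sqBasis A j⟫_ℂ‖ * ‖⟪u i, Matrix.toEuclideanLin A (sqBasis A j)⟫_ℂ‖ := by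
    intro i
    have hexp : Matrix.toEuclideanLin A (v i)
        = ∑ j, ⟪sqBasis A j, v i⟫_ℂ • Matrix.toEuclideanLin A (sqBasis A j) := by
      conv_lhs => rw [← (sqBasis A).sum_repr' (v i)]
      rw [map_sum]
      simp
    rw [hexp, inner_sum]
    refine le_trans (Complex.re_le_norm _) ?_
    refine le_trans (norm_sum_le _ _) (Finset.sum_le_sum fun j _ => ?_)
    rw [inner_smul_right, norm_mul, norm_inner_symm]
  have hcol : ∀ j, ∑ i, ‖⟪v i, sqBasis A j⟫_ℂ‖ * ‖⟪u i, Matrix.toEuclideanLin A (sqBasis A j)⟫_ℂ‖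
      ≤ sqEig A j := by
    intro j
    set f : ι → ℝ := fun i => ‖⟪v i, sqBasis A j⟫_ℂ‖
    set g : ι → ℝ := fun i => ‖⟪u i, Matrix.toEuclideanLin A (sqBasis A j)⟫_ℂ‖
    have cs := Finset.sum_mul_sq_le_sq_mul_sq Finset.univ f g
    have b1 : ∑ i, f i ^ 2 ≤ 1 := by
      have := hv.sum_inner_products_le (sqBasis A j) (s := Finset.univ)
      have hn : ‖sqBasis A j‖ = 1 := (sqBasis A).orthonormal.1 j
      rw [hn] at this
      simpa using this
    have b2 : ∑ i, g i ^ 2 ≤ sqEig A j ^ 2 := by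
      have := hu.sum_inner_products_le (Matrix.toEuclideanLin A (sqBasis A j)) (s := Finset.univ)
      rw [norm_lin_basis A j] at this
      exact this
    have hfg : 0 ≤ ∑ i, f i * g i :=
      Finset.sum_nonneg fun i _ => mul_nonneg (norm_nonneg _) (norm_nonneg _)
    have hf2 : 0 ≤ ∑ i, f i ^ 2 := Finset.sum_nonneg fun i _ => sq_nonneg _
    have hg2 : 0 ≤ ∑ i, g i ^ 2 := Finset.sum_nonneg fun i _ => sq_nonneg _
    have ht := sqEig_nonneg A j
    nlinarith [cs, b1, b2, hfg, hf2, hg2, ht]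
  calc ∑ i, (⟪u i, Matrix.toEuclideanLin A (v i)⟫_ℂ).re
      ≤ ∑ i, ∑ j, ‖⟪v i, sqBasis A j⟫_ℂ‖ * ‖⟪u i, Matrix.toEuclideanLin A (sqBasis A j)⟫_ℂ‖ :=
        Finset.sum_le_sum fun i _ => hterm i
    _ = ∑ j, ∑ i, ‖⟪v i, sqBasis A j⟫_ℂ‖ * ‖⟪u i, Matrix.toEuclideanLin A (sqBasis A j)⟫_ℂ‖ :=
        Finset.sum_comm
    _ ≤ ∑ j, sqEig A j := Finset.sum_le_sum fun j _ => hcol j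
    _ = trNorm A := (trNorm_eq_sum' A).symm

lemma exists_attain (M : Matrix (Fin d) (Fin d) ℂ) :
    ∃ (ι : Type) (_ : Fintype ι) (u v : ι → EuclideanSpace ℂ (Fin d)),
      Orthonormal ℂ u ∧ Orthonormal ℂ v ∧
      ∑ i, (⟪u i, Matrix.toEuclideanLin M (v i)⟫_ℂ).re = trNorm M := by
  classical
  refine ⟨{j : Fin d // sqEig M j ≠ 0}, inferInstance,
    (fun j => ((sqEig M j.1 : ℂ))⁻¹ • Matrix.toEuclideanLin M (sqBasis M j.1)),
    (fun j => sqBasis M j.1), ?_, ?_, ?_⟩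
  · rw [orthonormal_iff_ite]
    intro j k
    rw [inner_smul_left, inner_smul_right, inner_lin_basis]
    rw [map_inv₀, Complex.conj_ofReal]
    rcases eq_or_ne j k with rfl | hne
    · rw [if_pos rfl, if_pos rfl]
      have h0 : (sqEig M j.1 : ℂ) ≠ 0 := Complex.ofReal_ne_zero.mpr j.2
      field_simp
    · have h1 : (j : Fin d) ≠ (k : Fin d) := fun h => hne (Subtype.ext h)
      rw [if_neg h1, if_neg hne]
      simp
  · exact (sqBasis M).orthonormal.comp Subtype.val Subtype.val_injective
  · have hterm : ∀ j : {j : Fin d // sqEig M j ≠ 0},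
        (⟪((sqEig M j.1 : ℂ))⁻¹ • Matrix.toEuclideanLin M (sqBasis M j.1),
          Matrix.toEuclideanLin M (sqBasis M j.1)⟫_ℂ).re = sqEig M j.1 := by
      intro j
      rw [inner_smul_left, inner_lin_basis, if_pos rfl, mul_one, map_inv₀, Complex.conj_ofReal]
      have h0 : (sqEig M j.1 : ℂ) ≠ 0 := Complex.ofReal_ne_zero.mpr j.2
      rw [sq]
      field_simp
      exact Complex.ofReal_re _
    rw [Finset.sum_congr rfl fun j _ => hterm j]
    have h1 : ∑ (j : {j : Fin d // sqEig M j ≠ 0}), sqEig M j.1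
        = ∑ j ∈ Finset.univ.filter (fun j => sqEig M j ≠ 0), sqEig M j := by
      rw [Finset.sum_subtype (p := fun j => sqEig M j ≠ 0) (Finset.univ.filter (fun j => sqEig M j ≠ 0)) (by simp) (sqEig M)]
    rw [h1, Finset.sum_filter_ne_zero, trNorm_eq_sum']

lemma trNorm_nonneg (A : Matrix (Fin d) (Fin d) ℂ) : 0 ≤ trNorm A := by
  rw [trNorm_eq_sum']
  exact Finset.sum_nonneg fun j _ => sqEig_nonneg A j

lemma trNorm_add_le (A B : Matrix (Fin d) (Fin d) ℂ) :
    trNorm (A + B) ≤ trNorm A + trNorm B := by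
  obtain ⟨ι, _, u, v, hu, hv, hsum⟩ := exists_attain (A + B)
  rw [← hsum]
  have h : ∀ i, (⟪u i, Matrix.toEuclideanLin (A + B) (v i)⟫_ℂ).re
      = (⟪u i, Matrix.toEuclideanLin A (v i)⟫_ℂ).re
        + (⟪u i, Matrix.toEuclideanLin B (v i)⟫_ℂ).re := by
    intro i
    rw [map_add]
    rw [LinearMap.add_apply, inner_add_right, Complex.add_re]
  rw [Finset.sum_congr rfl fun i _ => h i, Finset.sum_add_distrib]
  exact add_le_add (sum_re_inner_le A u v hu hv) (sum_re_inner_le B u v hu hv)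

lemma trNorm_conjTranspose_le (A : Matrix (Fin d) (Fin d) ℂ) : trNorm Aᴴ ≤ trNorm A := by
  obtain ⟨ι, _, u, v, hu, hv, hsum⟩ := exists_attain Aᴴ
  rw [← hsum]
  have h : ∀ i, (⟪u i, Matrix.toEuclideanLin Aᴴ (v i)⟫_ℂ).re
      = (⟪v i, Matrix.toEuclideanLin A (u i)⟫_ℂ).re := by
    intro i
    rw [Matrix.toEuclideanLin_conjTranspose_eq_adjoint, LinearMap.adjoint_inner_right,
      ← inner_conj_symm]
    simp
    rw [← inner_conj_symm, Complex.conj_re]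
  rw [Finset.sum_congr rfl fun i _ => h i]
  exact sum_re_inner_le A v u hv hu

lemma trNorm_conjTranspose (A : Matrix (Fin d) (Fin d) ℂ) : trNorm Aᴴ = trNorm A := by
  refine le_antisymm (trNorm_conjTranspose_le A) ?_
  have := trNorm_conjTranspose_le Aᴴ
  rwa [conjTranspose_conjTranspose] at this

lemma posSemidef_real_smul {A : Matrix (Fin d) (Fin d) ℂ} (hA : A.PosSemidef)
    {r : ℝ} (hr : 0 ≤ r) : ((r : ℂ) • A).PosSemidef := by
  rw [posSemidef_iff_dotProduct_mulVec]
  constructor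
  · rw [IsHermitian, conjTranspose_smul, hA.1.eq]
    congr 1
    simp
  · intro x
    rw [Matrix.smul_mulVec, dotProduct_smul]
    exact smul_nonneg (by exact_mod_cast hr) (hA.dotProduct_mulVec_nonneg x)

lemma trNorm_smul (c : ℂ) (A : Matrix (Fin d) (Fin d) ℂ) :
    trNorm (c • A) = ‖c‖ * trNorm A := by
  have hP := (Matrix.posSemidef_conjTranspose_mul_self A).posSemidef_sqrt
  have hS : (((‖c‖ : ℝ) : ℂ) • (Matrix.posSemidef_conjTranspose_mul_self A).sqrt).PosSemidef :=
    posSemidef_real_smul hP (norm_nonneg c)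
  have hsq : (((‖c‖ : ℝ) : ℂ) • (Matrix.posSemidef_conjTranspose_mul_self A).sqrt) ^ 2
      = (c • A)ᴴ * (c • A) := by
    rw [smul_pow, (Matrix.posSemidef_conjTranspose_mul_self A).sq_sqrt,
      conjTranspose_smul, Matrix.smul_mul, Matrix.mul_smul, smul_smul]
    congr 1
    rw [RCLike.star_def]
    rw [show ((starRingEnd ℂ) c * c) = ((Complex.normSq c : ℝ) : ℂ) by
      rw [← Complex.mul_conj]; ring]
    rw [Complex.normSq_eq_norm_sq]
    push_cast
    ring
  have heq := hS.eq_sqrt_of_sq_eq (Matrix.posSemidef_conjTranspose_mul_self (c • A)) hsq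
  rw [trNorm_def', ← heq, Matrix.trace_smul]
  simp [trNorm_def']

lemma trNorm_psd {A : Matrix (Fin d) (Fin d) ℂ} (hA : A.PosSemidef) :
    trNorm A = A.trace.re := by
  have heq := hA.eq_sqrt_of_sq_eq (Matrix.posSemidef_conjTranspose_mul_self A)
    (by rw [sq, hA.1.eq])
  rw [trNorm_def', ← heq]

lemma trNorm_zero : trNorm (0 : Matrix (Fin d) (Fin d) ℂ) = 0 := by
  rw [trNorm_psd Matrix.PosSemidef.zero]
  simp

lemma trNorm_neg (A : Matrix (Fin d) (Fin d) ℂ) : trNorm (-A) = trNorm A := by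
  have := trNorm_smul (-1 : ℂ) A
  simpa using this

lemma trNorm_sub_le (A B : Matrix (Fin d) (Fin d) ℂ) :
    trNorm (A - B) ≤ trNorm A + trNorm B := by
  rw [sub_eq_add_neg]
  exact (trNorm_add_le A (-B)).trans (by rw [trNorm_neg])

lemma trNorm_pos {A : Matrix (Fin d) (Fin d) ℂ} (h : A ≠ 0) : 0 < trNorm A := by
  rcases (trNorm_nonneg A).lt_or_eq with hlt | heq
  · exact hlt
  · exfalso
    apply h
    have hall : ∀ j ∈ Finset.univ, sqEig A j = 0 := by
      intro j _
      have := (Finset.sum_eq_zero_iff_of_nonneg (fun j _ => sqEig_nonneg A j)).mp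
        (by rw [← trNorm_eq_sum', ← heq])
      exact this j (Finset.mem_univ j)
    have hP : (Matrix.posSemidef_conjTranspose_mul_self A).sqrt = 0 := by
      have hs := ((Matrix.posSemidef_conjTranspose_mul_self A).posSemidef_sqrt.1).spectral_theorem
      rw [hs, Unitary.conjStarAlgAut_apply]
      have : Matrix.diagonal (RCLike.ofReal ∘
          ((Matrix.posSemidef_conjTranspose_mul_self A).posSemidef_sqrt.1).eigenvalues)
          = (0 : Matrix (Fin d) (Fin d) ℂ) := by
        ext j k
        have hj := hall j (Finset.mem_univ j)
        simp only [sqEig] at hj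
        by_cases hjk : j = k
        · subst hjk; simp [Matrix.diagonal_apply_eq, hj]
        · simp [Matrix.diagonal_apply_ne _ hjk]
      rw [this, Matrix.mul_zero, Matrix.zero_mul]
    have := (Matrix.posSemidef_conjTranspose_mul_self A).sqrt_mul_self
    rw [hP, Matrix.mul_zero] at this
    exact Matrix.conjTranspose_mul_self_eq_zero.mp this.symm


lemma sandwich_mul (U D E : Matrix (Fin d) (Fin d) ℂ) (hUU : star U * U = 1) :
    (U * D * star U) * (U * E * star U) = U * (D * E) * star U := by
  calc (U * D * star U) * (U * E * star U)
      = U * (D * ((star U * U) * (E * star U))) := by simp only [Matrix.mul_assoc]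
    _ = U * (D * E) * star U := by rw [hUU, Matrix.one_mul]; simp only [Matrix.mul_assoc]

lemma trNorm_hermitian {A : Matrix (Fin d) (Fin d) ℂ} (hA : A.IsHermitian) :
    trNorm A = ∑ i, |hA.eigenvalues i| := by
  set U : Matrix (Fin d) (Fin d) ℂ := (hA.eigenvectorUnitary : Matrix (Fin d) (Fin d) ℂ) with hU
  have hUU : star U * U = 1 := Matrix.UnitaryGroup.star_mul_self _
  set S : Matrix (Fin d) (Fin d) ℂ :=
    U * Matrix.diagonal (fun i => ((|hA.eigenvalues i| : ℝ) : ℂ)) * star U with hSdef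
  have hSpsd : S.PosSemidef := by
    refine Matrix.PosSemidef.mul_mul_conjTranspose_same ?_ U
    refine Matrix.posSemidef_diagonal_iff.mpr fun i => ?_
    exact_mod_cast Complex.zero_le_real.mpr (abs_nonneg _)
  have hsq : S ^ 2 = Aᴴ * A := by
    rw [hA.eq, sq, hSdef, sandwich_mul _ _ _ hUU, Matrix.diagonal_mul_diagonal]
    conv_rhs => rw [hA.spectral_theorem, Unitary.conjStarAlgAut_apply]
    rw [sandwich_mul _ _ _ hUU, Matrix.diagonal_mul_diagonal]
    have hfun : (fun i => ((|hA.eigenvalues i| : ℝ) : ℂ) * ((|hA.eigenvalues i| : ℝ) : ℂ))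
        = (fun i => (RCLike.ofReal ∘ hA.eigenvalues) i * (RCLike.ofReal ∘ hA.eigenvalues) i) := by
      funext i
      simp only [Function.comp_apply]
      rw [← Complex.ofReal_mul, abs_mul_abs_self]
      norm_cast
    rw [hfun]
  have heq := hSpsd.eq_sqrt_of_sq_eq (Matrix.posSemidef_conjTranspose_mul_self A) hsq
  rw [trNorm_def', ← heq, hSdef, trace_unitary_conj _ _ hUU, Matrix.trace_diagonal, Complex.re_sum]
  simp

lemma jordan {A : Matrix (Fin d) (Fin d) ℂ} (hA : A.IsHermitian) :
    ∃ P N : Matrix (Fin d) (Fin d) ℂ, P.PosSemidef ∧ N.PosSemidef ∧ A = P - N ∧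
      trNorm A = P.trace.re + N.trace.re := by
  set U : Matrix (Fin d) (Fin d) ℂ := (hA.eigenvectorUnitary : Matrix (Fin d) (Fin d) ℂ) with hU
  have hUU : star U * U = 1 := Matrix.UnitaryGroup.star_mul_self _
  refine ⟨U * Matrix.diagonal (fun i => ((max (hA.eigenvalues i) 0 : ℝ) : ℂ)) * star U,
          U * Matrix.diagonal (fun i => ((max (-hA.eigenvalues i) 0 : ℝ) : ℂ)) * star U,
          ?_, ?_, ?_, ?_⟩
  · refine Matrix.PosSemidef.mul_mul_conjTranspose_same ?_ U
    exact Matrix.posSemidef_diagonal_iff.mpr fun i =>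
      (by exact_mod_cast Complex.zero_le_real.mpr (le_max_right _ _))
  · refine Matrix.PosSemidef.mul_mul_conjTranspose_same ?_ U
    exact Matrix.posSemidef_diagonal_iff.mpr fun i =>
      (by exact_mod_cast Complex.zero_le_real.mpr (le_max_right _ _))
  · have hdiag : Matrix.diagonal (RCLike.ofReal ∘ hA.eigenvalues : Fin d → ℂ)
        = Matrix.diagonal (fun i => ((max (hA.eigenvalues i) 0 : ℝ) : ℂ))
          - Matrix.diagonal (fun i => ((max (-hA.eigenvalues i) 0 : ℝ) : ℂ)) := by
      ext i k
      rcases eq_or_ne i k with rfl | hik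
      · simp only [Matrix.sub_apply, Matrix.diagonal_apply_eq, Function.comp_apply]
        rw [← Complex.ofReal_sub, max_zero_sub_max_neg_zero_eq_self]
        norm_cast
      · simp [Matrix.diagonal_apply_ne _ hik]
    conv_lhs => rw [hA.spectral_theorem, Unitary.conjStarAlgAut_apply, hdiag]
    rw [Matrix.mul_sub, Matrix.sub_mul]
  · rw [trNorm_hermitian hA, trace_unitary_conj _ _ hUU, trace_unitary_conj _ _ hUU,
      Matrix.trace_diagonal, Matrix.trace_diagonal, Complex.re_sum, Complex.re_sum,
      ← Finset.sum_add_distrib]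
    congr 1
    funext i
    rw [Complex.ofReal_re, Complex.ofReal_re]
    rcases le_total 0 (hA.eigenvalues i) with h | h
    · rw [abs_of_nonneg h, max_eq_left h, max_eq_right (neg_nonpos.mpr h), add_zero]
    · rw [abs_of_nonpos h, max_eq_right h, max_eq_left (neg_nonneg.mpr h), zero_add]

lemma abs_trace_le_trNorm {A : Matrix (Fin d) (Fin d) ℂ} (hA : A.IsHermitian) :
    ‖A.trace‖ ≤ trNorm A := by
  rw [trace_eq_sum_eigenvalues hA, trNorm_hermitian hA]
  rw [show (∑ i, (hA.eigenvalues i : ℂ)) = ((∑ i, hA.eigenvalues i : ℝ) : ℂ) by push_cast; rfl]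
  rw [Complex.norm_real, Real.norm_eq_abs]
  exact Finset.abs_sum_le_sum_abs _ _

section Main

variable (Φ : Matrix (Fin d) (Fin d) ℂ →ₗ[ℂ] Matrix (Fin d) (Fin d) ℂ)

lemma herm_contraction (hpos : TD.PosMap Φ) (htr : TD.TrPres Φ)
    {A : Matrix (Fin d) (Fin d) ℂ} (hA : A.IsHermitian) : trNorm (Φ A) ≤ trNorm A := by
  obtain ⟨P, N, hP, hN, hPN, htrace⟩ := jordan hA
  have h1 : Φ A = Φ P - Φ N := by rw [hPN, map_sub]
  calc trNorm (Φ A) ≤ trNorm (Φ P) + trNorm (Φ N) := by rw [h1]; exact trNorm_sub_le _ _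
    _ = (Φ P).trace.re + (Φ N).trace.re := by
        rw [trNorm_psd (hpos P hP), trNorm_psd (hpos N hN)]
    _ = P.trace.re + N.trace.re := by rw [htr P, htr N]
    _ = trNorm A := htrace.symm

lemma exists_good (hd : 2 ≤ d) :
    ∃ X : Matrix (Fin d) (Fin d) ℂ, X.IsHermitian ∧ X.trace = 0 ∧ X ≠ 0 := by
  have h0 : (0 : ℕ) < d := by omega
  have h1 : (1 : ℕ) < d := by omega
  set i : Fin d := ⟨0, h0⟩ with hi
  set j : Fin d := ⟨1, h1⟩ with hj
  have hij : i ≠ j := by simp [hi, hj, Fin.ext_iff]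
  refine ⟨Matrix.single i j 1 + Matrix.single j i 1, ?_, ?_, ?_⟩
  · rw [Matrix.IsHermitian, Matrix.conjTranspose_add]
    have e1 : (Matrix.single i j (1:ℂ))ᴴ = Matrix.single j i 1 := by
      ext a b
      simp [Matrix.conjTranspose_apply, Matrix.single, and_comm]
    have e2 : (Matrix.single j i (1:ℂ))ᴴ = Matrix.single i j 1 := by
      ext a b
      simp [Matrix.conjTranspose_apply, Matrix.single, and_comm]
    rw [e1, e2, add_comm]
  · rw [Matrix.trace_add, Matrix.trace_single_eq_of_ne i j (1:ℂ) hij,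
      Matrix.trace_single_eq_of_ne j i (1:ℂ) hij.symm, add_zero]
  · intro h
    have := congrFun (congrFun h i) j
    rw [Matrix.add_apply, Matrix.single_apply_same] at this
    have h2 : Matrix.single j i (1:ℂ) i j = 0 := Matrix.single_apply_of_ne _ _ _ _ _ (by tauto)
    rw [h2] at this
    simp at this

variable {Φ}

lemma kappa_bddAbove (hpos : TD.PosMap Φ) (htr : TD.TrPres Φ) :
    BddAbove (Set.range fun X : {X : Matrix (Fin d) (Fin d) ℂ //
      X.IsHermitian ∧ X.trace = 0 ∧ X ≠ 0} => trNorm (Φ X.1) / trNorm X.1) := by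
  refine ⟨1, ?_⟩
  rintro x ⟨X, rfl⟩
  have hpos' := trNorm_pos X.2.2.2
  rw [div_le_one hpos']
  exact herm_contraction Φ hpos htr X.2.1

lemma kappa_term_le (hpos : TD.PosMap Φ) (htr : TD.TrPres Φ)
    {Y : Matrix (Fin d) (Fin d) ℂ} (hY : Y.IsHermitian) (htrY : Y.trace = 0) :
    trNorm (Φ Y) ≤ TD.kappaTr Φ * trNorm Y := by
  by_cases h0 : Y = 0
  · subst h0
    simp [map_zero, trNorm_zero]
  · have hle := le_ciSup (kappa_bddAbove hpos htr) (⟨Y, hY, htrY, h0⟩ :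
      {X : Matrix (Fin d) (Fin d) ℂ // X.IsHermitian ∧ X.trace = 0 ∧ X ≠ 0})
    rw [TD.kappaTr]
    have hp := trNorm_pos h0
    calc trNorm (Φ Y) = trNorm (Φ Y) / trNorm Y * trNorm Y := by field_simp
      _ ≤ _ := mul_le_mul_of_nonneg_right hle hp.le

lemma kappa_nonneg (hd : 2 ≤ d) (hpos : TD.PosMap Φ) (htr : TD.TrPres Φ) :
    0 ≤ TD.kappaTr Φ := by
  obtain ⟨X, hX1, hX2, hX3⟩ := exists_good hd
  refine le_trans ?_ (le_ciSup (kappa_bddAbove hpos htr)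
    (⟨X, hX1, hX2, hX3⟩ : {X : Matrix (Fin d) (Fin d) ℂ // X.IsHermitian ∧ X.trace = 0 ∧ X ≠ 0}))
  exact div_nonneg (trNorm_nonneg _) (trNorm_nonneg _)

lemma herm_piece (hd : 2 ≤ d) (hpos : TD.PosMap Φ) (htr : TD.TrPres Φ)
    {τ : Matrix (Fin d) (Fin d) ℂ} (hτ : TD.Density τ)
    {A : Matrix (Fin d) (Fin d) ℂ} (hA : A.IsHermitian) :
    trNorm (Φ A - A.trace • Φ τ) ≤ 2 * TD.kappaTr Φ * trNorm A := by
  have htrstar : star A.trace = A.trace := by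
    rw [← Matrix.trace_conjTranspose, hA.eq]
  set Y := A - A.trace • τ with hYdef
  have hY : Y.IsHermitian := by
    rw [Matrix.IsHermitian, hYdef, Matrix.conjTranspose_sub, Matrix.conjTranspose_smul,
      hA.eq, htrstar, hτ.1.1.eq]
  have htrY : Y.trace = 0 := by
    rw [hYdef, Matrix.trace_sub, Matrix.trace_smul, hτ.2, smul_eq_mul, mul_one, sub_self]
  have heq2 : Φ A - A.trace • Φ τ = Φ Y := by rw [hYdef, map_sub, LinearMap.map_smul]
  have h5 : trNorm τ = 1 := by
    rw [trNorm_psd hτ.1, hτ.2]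
    simp
  have h6 : ‖A.trace‖ ≤ trNorm A := by
    exact abs_trace_le_trNorm hA
  have h4 : trNorm Y ≤ 2 * trNorm A := by
    calc trNorm Y ≤ trNorm A + trNorm (A.trace • τ) := trNorm_sub_le _ _
      _ = trNorm A + ‖A.trace‖ * trNorm τ := by rw [trNorm_smul]
      _ ≤ trNorm A + trNorm A * 1 := by
          refine add_le_add_right ?_ _
          rw [h5, mul_one, mul_one]
          exact h6
      _ = 2 * trNorm A := by ring
  calc trNorm (Φ A - A.trace • Φ τ) = trNorm (Φ Y) := by rw [heq2]
    _ ≤ TD.kappaTr Φ * trNorm Y := kappa_term_le hpos htr hY htrY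
    _ ≤ TD.kappaTr Φ * (2 * trNorm A) :=
        mul_le_mul_of_nonneg_left h4 (kappa_nonneg hd hpos htr)
    _ = 2 * TD.kappaTr Φ * trNorm A := by ring

lemma key_bound (hd : 2 ≤ d) (hpos : TD.PosMap Φ) (htr : TD.TrPres Φ)
    {τ : Matrix (Fin d) (Fin d) ℂ} (hτ : TD.Density τ) (X : Matrix (Fin d) (Fin d) ℂ) :
    trNorm (Φ X - X.trace • Φ τ) ≤ 4 * TD.kappaTr Φ * trNorm X := by
  obtain ⟨A, hAdef⟩ : ∃ A : Matrix (Fin d) (Fin d) ℂ, A = (1/2 : ℂ) • (X + Xᴴ) := ⟨_, rfl⟩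
  obtain ⟨B, hBdef⟩ : ∃ B : Matrix (Fin d) (Fin d) ℂ, B = (-Complex.I/2) • (X - Xᴴ) := ⟨_, rfl⟩
  have hA : A.IsHermitian := by
    rw [Matrix.IsHermitian, hAdef, Matrix.conjTranspose_smul, Matrix.conjTranspose_add,
      Matrix.conjTranspose_conjTranspose]
    congr 1
    · simp
    · rw [add_comm]
  have hB : B.IsHermitian := by
    rw [Matrix.IsHermitian, hBdef, Matrix.conjTranspose_smul, Matrix.conjTranspose_sub,
      Matrix.conjTranspose_conjTranspose]
    rw [show star (-Complex.I/2) = Complex.I/2 by simp]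
    rw [show (Xᴴ - X) = (-1 : ℂ) • (X - Xᴴ) by simp]
    rw [smul_smul]
    congr 1
    ring
  have hX : X = A + Complex.I • B := by
    rw [hAdef, hBdef, smul_smul,
      show Complex.I * (-Complex.I/2) = (1/2 : ℂ) by
        linear_combination (-(1:ℂ)/2) * Complex.I_mul_I,
      ← smul_add,
      show X + Xᴴ + (X - Xᴴ) = (2 : ℂ) • X from by rw [two_smul]; abel,
      smul_smul]
    norm_num
  have hnormA : trNorm A ≤ trNorm X := by
    rw [hAdef, trNorm_smul]
    calc ‖(1/2 : ℂ)‖ * trNorm (X + Xᴴ) ≤ ‖(1/2 : ℂ)‖ * (trNorm X + trNorm Xᴴ) := by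
          refine mul_le_mul_of_nonneg_left (trNorm_add_le _ _) (norm_nonneg _)
      _ = trNorm X := by
          rw [trNorm_conjTranspose]
          rw [show ‖(1/2 : ℂ)‖ = 1/2 by norm_num]
          ring
  have hnormB : trNorm B ≤ trNorm X := by
    rw [hBdef, trNorm_smul]
    have : ‖(-Complex.I/2 : ℂ)‖ = 1/2 := by simp
    rw [this]
    calc (1/2) * trNorm (X - Xᴴ) ≤ (1/2) * (trNorm X + trNorm Xᴴ) := by
          refine mul_le_mul_of_nonneg_left (trNorm_sub_le _ _) (by norm_num)
      _ = trNorm X := by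
          rw [trNorm_conjTranspose]
          ring
  have hsplit : Φ X - X.trace • Φ τ
      = (Φ A - A.trace • Φ τ) + Complex.I • (Φ B - B.trace • Φ τ) := by
    have e1 : Φ X = Φ A + Complex.I • Φ B := by
      conv_lhs => rw [hX]
      rw [map_add, LinearMap.map_smul]
    have e2 : X.trace = A.trace + Complex.I * B.trace := by
      conv_lhs => rw [hX]
      rw [Matrix.trace_add, Matrix.trace_smul, smul_eq_mul]
    rw [e1, e2, add_smul, smul_sub, mul_smul]
    abel
  calc trNorm (Φ X - X.trace • Φ τ)
      ≤ trNorm (Φ A - A.trace • Φ τ) + trNorm (Complex.I • (Φ B - B.trace • Φ τ)) := by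
        rw [hsplit]; exact trNorm_add_le _ _
    _ = trNorm (Φ A - A.trace • Φ τ) + trNorm (Φ B - B.trace • Φ τ) := by
        rw [trNorm_smul]; simp
    _ ≤ 2 * TD.kappaTr Φ * trNorm A + 2 * TD.kappaTr Φ * trNorm B :=
        add_le_add (herm_piece hd hpos htr hτ hA) (herm_piece hd hpos htr hτ hB)
    _ ≤ 2 * TD.kappaTr Φ * trNorm X + 2 * TD.kappaTr Φ * trNorm X := by
        have hk := kappa_nonneg hd hpos htr
        exact add_le_add
          (mul_le_mul_of_nonneg_left hnormA (by linarith))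
          (mul_le_mul_of_nonneg_left hnormB (by linarith))
    _ = 4 * TD.kappaTr Φ * trNorm X := by ring

end Main

end TDProof


theorem stmt7 {d : ℕ} (hd : 2 ≤ d)
    (Φ : Matrix (Fin d) (Fin d) ℂ →ₗ[ℂ] Matrix (Fin d) (Fin d) ℂ)
    (hpos : TD.PosMap Φ) (htr : TD.TrPres Φ)
    (τ : Matrix (Fin d) (Fin d) ℂ) (hτ : TD.Density τ) :
    TD.kappaTr Φ ≤ TD.opNorm1 (Φ - TD.replaceChan (Φ τ)) ∧
    TD.opNorm1 (Φ - TD.replaceChan (Φ τ)) ≤ 4 * TD.kappaTr Φ := by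
  have hLapp : ∀ X, (Φ - TD.replaceChan (Φ τ)) X = Φ X - X.trace • Φ τ := fun X => rfl
  obtain ⟨X₀, hX₀h, hX₀t, hX₀n⟩ := TDProof.exists_good hd
  haveI inst1 : Nonempty {X : Matrix (Fin d) (Fin d) ℂ // X.IsHermitian ∧ X.trace = 0 ∧ X ≠ 0} :=
    ⟨⟨X₀, hX₀h, hX₀t, hX₀n⟩⟩
  haveI inst2 : Nonempty {X : Matrix (Fin d) (Fin d) ℂ // X ≠ 0} := ⟨⟨X₀, hX₀n⟩⟩
  have hterm : ∀ X : Matrix (Fin d) (Fin d) ℂ,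
      TD.trNorm ((Φ - TD.replaceChan (Φ τ)) X) ≤ 4 * TD.kappaTr Φ * TD.trNorm X := by
    intro X
    rw [hLapp]
    exact TDProof.key_bound hd hpos htr hτ X
  have hbddL : BddAbove (Set.range fun X : {X : Matrix (Fin d) (Fin d) ℂ // X ≠ 0} =>
      TD.trNorm ((Φ - TD.replaceChan (Φ τ)) X.1) / TD.trNorm X.1) := by
    refine ⟨4 * TD.kappaTr Φ, ?_⟩
    rintro x ⟨X, rfl⟩
    rw [div_le_iff₀ (TDProof.trNorm_pos X.2)]
    exact hterm X.1
  constructor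
  · rw [TD.kappaTr]
    apply ciSup_le
    intro X
    have hEq : Φ X.1 = (Φ - TD.replaceChan (Φ τ)) X.1 := by
      rw [hLapp, X.2.2.1, zero_smul, sub_zero]
    rw [hEq, TD.opNorm1]
    exact le_ciSup hbddL (⟨X.1, X.2.2.2⟩ : {X : Matrix (Fin d) (Fin d) ℂ // X ≠ 0})
  · rw [TD.opNorm1]
    apply ciSup_le
    intro X
    rw [div_le_iff₀ (TDProof.trNorm_pos X.2)]
    exact hterm X.1
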